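/- There exists a constant C > 0 such that for all r, s ≥ 0, |p'(r) − p'(s)| ≤ C·|r − s| / (⟨max(r,s)⟩ · ⟨min(r,s)⟩²). -/

import Mathlib

noncomputable def q (r : ℝ) : ℝ := Real.sqrt ((2 + r ^ 2) / (1 + r ^ 2))
noncomputable def p (r : ℝ) : ℝ := r * q r

lemma hu (r : ℝ) : (0:ℝ) < 1 + r ^ 2 := by positivity

lemma q_pos (r : ℝ) : 0 < q r := by
  apply Real.sqrt_pos.2
  positivity

lemma q_sq (r : ℝ) : (1 + r ^ 2) * q r ^ 2 = 2 + r ^ 2 := by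
  have : q r ^ 2 = (2 + r ^ 2) / (1 + r ^ 2) := by
    rw [q, Real.sq_sqrt (by positivity)]
  rw [this]
  field_simp

lemma q_ge_one (r : ℝ) : 1 ≤ q r := by
  rw [q]
  have h1 : (1:ℝ) ≤ (2 + r ^ 2) / (1 + r ^ 2) := by
    rw [le_div_iff₀ (hu r)]; nlinarith [sq_nonneg r]
  calc (1:ℝ) = Real.sqrt 1 := Real.sqrt_one.symm
    _ ≤ _ := Real.sqrt_le_sqrt h1

lemma hasDerivAt_q (r : ℝ) : HasDerivAt q (-r / ((1 + r ^ 2) ^ 2 * q r)) r := by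
  have hf : HasDerivAt (fun x : ℝ => (2 + x ^ 2) / (1 + x ^ 2))
      ((2 * r * (1 + r ^ 2) - (2 + r ^ 2) * (2 * r)) / (1 + r ^ 2) ^ 2) r := by
    exact (((hasDerivAt_pow 2 r).const_add 2).div ((hasDerivAt_pow 2 r).const_add 1)
      (by positivity)).congr_deriv (by ring)
  have h := hf.sqrt (by positivity)
  refine h.congr_deriv (Eq.symm ?_)
  have hq := q_pos r
  rw [show Real.sqrt ((2 + r ^ 2) / (1 + r ^ 2)) = q r from rfl]
  field_simp
  ring

noncomputable def g (r : ℝ) : ℝ := ((1 + r ^ 2) ^ 2 + 1) / ((1 + r ^ 2) ^ 2 * q r)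

lemma hasDerivAt_p (r : ℝ) : HasDerivAt p (g r) r := by
  have h := (hasDerivAt_id r).mul (hasDerivAt_q r)
  refine h.congr_deriv (Eq.symm ?_)
  have hq := q_pos r
  have hsq := q_sq r
  have hu := hu r
  rw [g, id_eq]
  field_simp
  nlinarith [hsq, hq, hu]

noncomputable def G (r : ℝ) : ℝ :=
  r * ((1 + r ^ 2) ^ 2 - 4 * (1 + r ^ 2) - 3) / ((1 + r ^ 2) ^ 4 * q r ^ 3)

lemma hasDerivAt_g (r : ℝ) : HasDerivAt g (G r) r := by
  have hq := q_pos r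
  have hu := hu r
  have hN : HasDerivAt (fun x : ℝ => (1 + x ^ 2) ^ 2 + 1) (2 * (1 + r ^ 2) * (2 * r)) r := by
    have := (((hasDerivAt_pow 2 r).const_add 1).pow 2).add_const 1
    refine this.congr_deriv (Eq.symm ?_)
    simp
  have hD : HasDerivAt (fun x : ℝ => (1 + x ^ 2) ^ 2 * q x)
      (2 * (1 + r ^ 2) * (2 * r) * q r + (1 + r ^ 2) ^ 2 * (-r / ((1 + r ^ 2) ^ 2 * q r))) r := by
    have := (((hasDerivAt_pow 2 r).const_add 1).pow 2).mul (hasDerivAt_q r)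
    refine this.congr_deriv (Eq.symm ?_)
    simp
  have h := hN.div hD (by positivity)
  refine h.congr_deriv (Eq.symm ?_)
  have hsq := q_sq r
  rw [G]
  field_simp
  linear_combination 4 * r * hsq

lemma G_bound (r : ℝ) (hr : 0 ≤ r) : |G r| ≤ 8 / Real.sqrt (1 + r ^ 2) ^ 3 := by
  have hq := q_pos r
  have hq1 := q_ge_one r
  have hu := hu r
  set A := Real.sqrt (1 + r ^ 2) with hA_def
  have hA : 0 < A := Real.sqrt_pos.2 hu
  have hA2 : A ^ 2 = 1 + r ^ 2 := Real.sq_sqrt hu.le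
  have hrA : r ≤ A := by
    rw [hA_def]
    nlinarith [Real.sq_sqrt hu.le, Real.sqrt_nonneg (1 + r ^ 2), sq_nonneg (Real.sqrt (1+r^2) - r)]
  have hq3 : 1 ≤ q r ^ 3 := one_le_pow₀ hq1
  have hden : 0 < (1 + r ^ 2) ^ 4 * q r ^ 3 := by positivity
  rw [G, abs_div, abs_of_pos hden, div_le_div_iff₀ hden (by positivity)]
  have h1 : |r * ((1 + r ^ 2) ^ 2 - 4 * (1 + r ^ 2) - 3)| ≤ 8 * r * (1 + r ^ 2) ^ 2 := by
    rw [abs_mul, abs_of_nonneg hr]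
    have h2 : |(1 + r ^ 2) ^ 2 - 4 * (1 + r ^ 2) - 3| ≤ 8 * (1 + r ^ 2) ^ 2 := by
      rw [abs_le]
      constructor <;> nlinarith [sq_nonneg r, sq_nonneg (r ^ 2)]
    calc r * |(1 + r ^ 2) ^ 2 - 4 * (1 + r ^ 2) - 3| ≤ r * (8 * (1 + r ^ 2) ^ 2) :=
          mul_le_mul_of_nonneg_left h2 hr
      _ = 8 * r * (1 + r ^ 2) ^ 2 := by ring
  have h3 : r * A ^ 3 ≤ (1 + r ^ 2) ^ 2 := by
    calc r * A ^ 3 ≤ A * A ^ 3 := mul_le_mul_of_nonneg_right hrA (by positivity)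
      _ = (A ^ 2) ^ 2 := by ring
      _ = (1 + r ^ 2) ^ 2 := by rw [hA2]
  calc |r * ((1 + r ^ 2) ^ 2 - 4 * (1 + r ^ 2) - 3)| * A ^ 3
      ≤ 8 * r * (1 + r ^ 2) ^ 2 * A ^ 3 := mul_le_mul_of_nonneg_right h1 (by positivity)
    _ = 8 * (1 + r ^ 2) ^ 2 * (r * A ^ 3) := by ring
    _ ≤ 8 * (1 + r ^ 2) ^ 2 * (1 + r ^ 2) ^ 2 := by
        exact mul_le_mul_of_nonneg_left h3 (by positivity)
    _ ≤ 8 * ((1 + r ^ 2) ^ 4 * q r ^ 3) := by nlinarith [hq3, hu]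

lemma g_near_one (r : ℝ) : |g r - 1| ≤ 1 / (1 + r ^ 2) := by
  have hq := q_pos r
  have hq1 := q_ge_one r
  have hu := hu r
  have hsq := q_sq r
  have hd : 0 < (1 + r ^ 2) ^ 2 * q r := by positivity
  have key : g r - 1 = ((1 + r ^ 2) ^ 2 + 1 - (1 + r ^ 2) ^ 2 * q r) / ((1 + r ^ 2) ^ 2 * q r) := by
    rw [g]; field_simp
  rw [key, abs_div, abs_of_pos hd, div_le_div_iff₀ hd hu]
  have h5 : (1 + r ^ 2) * (q r ^ 2 - 1) = 1 := by linarith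
  have h6 : (1 + r ^ 2) ^ 2 * q r ^ 2 - (1 + r ^ 2) ^ 2 = 1 + r ^ 2 := by
    linear_combination (1 + r ^ 2) * h5
  have h7 : (1 + r ^ 2) ^ 2 * q r ≤ (1 + r ^ 2) ^ 2 * q r ^ 2 := by nlinarith [hq1, hu]
  have hnum : |(1 + r ^ 2) ^ 2 + 1 - (1 + r ^ 2) ^ 2 * q r| ≤ (1 + r ^ 2) * q r := by
    rw [abs_le]
    constructor
    · nlinarith [h6, h7, hq1, hu, hq]
    · nlinarith [hq1, hu, hq, mul_le_mul_of_nonneg_left hq1 hu.le]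
  calc |(1 + r ^ 2) ^ 2 + 1 - (1 + r ^ 2) ^ 2 * q r| * (1 + r ^ 2)
      ≤ (1 + r ^ 2) * q r * (1 + r ^ 2) := mul_le_mul_of_nonneg_right hnum hu.le
    _ = 1 * ((1 + r ^ 2) ^ 2 * q r) := by ring

lemma lip (r s : ℝ) (hs : 0 ≤ s) (hsr : s ≤ r) :
    |g r - g s| ≤ 8 / Real.sqrt (1 + s ^ 2) ^ 3 * (r - s) := by
  have hA : 0 < Real.sqrt (1 + s ^ 2) := Real.sqrt_pos.2 (hu s)
  have key := Convex.norm_image_sub_le_of_norm_hasDerivWithin_le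
    (f := g) (f' := G) (C := 8 / Real.sqrt (1 + s ^ 2) ^ 3)
    (fun x _ => (hasDerivAt_g x).hasDerivWithinAt)
    (fun x hx => ?_) (convex_Icc s r) (Set.left_mem_Icc.2 hsr) (Set.right_mem_Icc.2 hsr)
  · rw [Real.norm_eq_abs, Real.norm_eq_abs, abs_of_nonneg (sub_nonneg.2 hsr)] at key
    exact key
  · rw [Real.norm_eq_abs]
    refine (G_bound x (hs.trans hx.1)).trans ?_
    have hx2 : Real.sqrt (1 + s ^ 2) ≤ Real.sqrt (1 + x ^ 2) := by
      apply Real.sqrt_le_sqrt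
      nlinarith [hx.1, hs]
    have hpow : Real.sqrt (1 + s ^ 2) ^ 3 ≤ Real.sqrt (1 + x ^ 2) ^ 3 := by gcongr
    exact div_le_div_of_nonneg_left (by norm_num) (by positivity) hpow

theorem stmt5 :
    ∃ C : ℝ, 0 < C ∧
      ∀ r s : ℝ, 0 ≤ r → 0 ≤ s →
        |deriv p r - deriv p s| ≤
          C * |r - s| /
            (Real.sqrt (1 + max r s ^ 2) * Real.sqrt (1 + min r s ^ 2) ^ 2) := by
  have main : ∀ r s : ℝ, 0 ≤ s → s ≤ r →
      |g r - g s| ≤ 16 * (r - s) / (Real.sqrt (1 + r ^ 2) * Real.sqrt (1 + s ^ 2) ^ 2) := by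
    intro r s hs hsr
    have hr : 0 ≤ r := hs.trans hsr
    set A := Real.sqrt (1 + s ^ 2) with hA_def
    set B := Real.sqrt (1 + r ^ 2) with hB_def
    have hA : 0 < A := Real.sqrt_pos.2 (hu s)
    have hB : 0 < B := Real.sqrt_pos.2 (hu r)
    have hA2 : A ^ 2 = 1 + s ^ 2 := Real.sq_sqrt (hu s).le
    have hB2 : B ^ 2 = 1 + r ^ 2 := Real.sq_sqrt (hu r).le
    have hsA : s ≤ A := by nlinarith [hA2, hA]
    have hrB : r ≤ B := by nlinarith [hB2, hB]
    have hAB : A ≤ B := by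
      apply Real.sqrt_le_sqrt; nlinarith
    by_cases hc : B ≤ 2 * A
    · refine (lip r s hs hsr).trans ?_
      rw [div_mul_eq_mul_div, div_le_div_iff₀ (by positivity) (by positivity)]
      nlinarith [sub_nonneg.2 hsr, mul_pos hA (mul_pos hA hA), hc, hA, hB,
        mul_le_mul_of_nonneg_right hc (mul_nonneg (mul_nonneg hA.le hA.le) (sub_nonneg.2 hsr))]
    · push_neg at hc
      have h2 : B - A ≤ r - s := by
        nlinarith [mul_nonneg (sub_nonneg.2 hsr) (by linarith : (0:ℝ) ≤ B + A - (r + s)),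
          hA2, hB2]
      have h3 : B ≤ 2 * (r - s) := by linarith
      have t1 := g_near_one r
      have t2 := g_near_one s
      rw [← hB2] at t1
      rw [← hA2] at t2
      have tri : |g r - g s| ≤ 1 / B ^ 2 + 1 / A ^ 2 := by
        calc |g r - g s| = |(g r - 1) - (g s - 1)| := by ring_nf
          _ ≤ |g r - 1| + |g s - 1| := abs_sub _ _
          _ ≤ 1 / B ^ 2 + 1 / A ^ 2 := add_le_add t1 t2
      refine tri.trans ?_
      rw [div_add_div _ _ (by positivity) (by positivity),
        div_le_div_iff₀ (by positivity) (by positivity)]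
      have hAB2 : A ^ 2 ≤ B ^ 2 := by nlinarith
      nlinarith [h3, hA, hB, mul_pos hA hA, mul_pos hB hB,
        mul_le_mul_of_nonneg_right h3 (by positivity : (0:ℝ) ≤ B ^ 2 * A ^ 2),
        mul_le_mul_of_nonneg_right hAB2 (by positivity : (0:ℝ) ≤ B * A ^ 2)]
  refine ⟨16, by norm_num, fun r s hr hs => ?_⟩
  rw [(hasDerivAt_p r).deriv, (hasDerivAt_p s).deriv]
  rcases le_total s r with h | h
  · rw [max_eq_left h, min_eq_right h, abs_of_nonneg (sub_nonneg.2 h)]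
    exact (main r s hs h).trans_eq (by ring_nf)
  · rw [max_eq_right h, min_eq_left h, abs_sub_comm (g r) (g s), abs_sub_comm r s,
      abs_of_nonneg (sub_nonneg.2 h)]
    exact (main s r hr h).trans_eq (by ring_nf)
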